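/- Fix a real number q. Let A be a unital complex star algebra, let α, β, F ∈ A with F* = F and F·α = α·F, and set f = F·β − β·F. Let U = [[α, −q·β*], [β, α*]] and V = [[α*, β*], [−q·β, α]] in M₂(A), and let F̃ = [[F, 0], [0, F]]. Then (F̃·U − U·F̃)·(F̃·V − V·F̃) = [[−q²·f*·f, 0], [0, −f·f*]] in M₂(A). -/

import Mathlib

/-- Let `A` be a unital complex star algebra, `q : ℝ`, and let
`α, β, F ∈ A` with `F* = F` and `Fα = αF`. Set `f = Fβ − βF`,
`U = [[α, −qβ*],[β, α*]]`, `V = [[α*, β*],[−qβ, α]]`, `F̃ = [[F,0],[0,F]]`. Then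
`(F̃U − UF̃)(F̃V − VF̃) = [[−q² f* f, 0],[0, −f f*]]`. -/
theorem commutator_product_identity {A : Type*} [Ring A] [StarRing A] [Algebra ℂ A]
    [StarModule ℂ A] (q : ℝ) (α β F : A) (hF : star F = F) (hFα : F * α = α * F) :
    (!![F, 0; 0, F] * !![α, -((q : ℂ) • star β); β, star α] -
          !![α, -((q : ℂ) • star β); β, star α] * !![F, 0; 0, F]) *
        (!![F, 0; 0, F] * !![star α, star β; -((q : ℂ) • β), α] -
          !![star α, star β; -((q : ℂ) • β), α] * !![F, 0; 0, F]) =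
      (!![-(((q : ℂ) ^ 2) • (star (F * β - β * F) * (F * β - β * F))), 0;
          0, -((F * β - β * F) * star (F * β - β * F))] : Matrix (Fin 2) (Fin 2) A) := by
  have hFα' : F * star α = star α * F := by
    have := congrArg star hFα
    simp only [star_mul, hF] at this
    exact this.symm
  set f := F * β - β * F with hf
  have hstar : star f = star β * F - F * star β := by
    simp [hf, star_sub, star_mul, hF]
  have h1 : (!![F, 0; 0, F] * !![α, -((q : ℂ) • star β); β, star α] -
      !![α, -((q : ℂ) • star β); β, star α] * !![F, 0; 0, F]) =
      !![0, (q : ℂ) • star f; f, 0] := by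
    ext i j
    fin_cases i <;> fin_cases j <;>
      simp [Matrix.mul_apply, Fin.sum_univ_succ, hFα, hFα', hstar, hf, hF,
        mul_smul_comm, smul_mul_assoc, smul_sub] <;>
      abel
  have h2 : (!![F, 0; 0, F] * !![star α, star β; -((q : ℂ) • β), α] -
      !![star α, star β; -((q : ℂ) • β), α] * !![F, 0; 0, F]) =
      !![0, -star f; -((q : ℂ) • f), 0] := by
    ext i j
    fin_cases i <;> fin_cases j <;>
      simp [Matrix.mul_apply, Fin.sum_univ_succ, hFα, hFα', hstar, hf, hF,
        mul_smul_comm, smul_mul_assoc, smul_sub] <;>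
      abel
  rw [h1, h2, Matrix.mul_fin_two]
  congr 1 <;>
    simp [smul_mul_assoc, mul_smul_comm, smul_smul, pow_two, ← Complex.ofReal_mul,
      Complex.coe_smul]
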